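/- Let N ≥ 2. There is no nonzero σ-finite Borel measure μ on [0,1] that is absolutely continuous with respect to Lebesgue measure and invariant under F(N), i.e. satisfying μ(f⁻¹(A)) = μ(A) for every f ∈ F(N) and every Borel set A ⊆ [0,1]. Equivalently, any such invariant absolutely continuous σ-finite measure is the zero measure. -/

import Mathlib

/-- A real number is an `N`-adic rational if it equals `k / N^m` for some `k : ℤ`, `m : ℕ`. -/
def IsNAdic (N : ℕ) (x : ℝ) : Prop :=
  ∃ (k : ℤ) (m : ℕ), x = (k : ℝ) / (N : ℝ) ^ m

/-- Membership (as a map of `[0,1]`) in the generalized Thompson group `F(N)`: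
`f 0 = 0`, `f 1 = 1`, and there is a finite partition `0 = a 0 < a 1 < ⋯ < a n = 1`
of `[0,1]` by `N`-adic rationals such that on each piece `[a i, a (i+1)]` the map `f`
is affine with slope an integer power of `N`.  (Such an `f` is automatically an
increasing piecewise-linear homeomorphism of `[0,1]` onto itself, with all
non-differentiability points `N`-adic.) -/
def InFN (N : ℕ) (f : ℝ → ℝ) : Prop :=
  f 0 = 0 ∧ f 1 = 1 ∧
    ∃ (n : ℕ) (a : ℕ → ℝ), 0 < n ∧ a 0 = 0 ∧ a n = 1 ∧
      (∀ i < n, a i < a (i + 1)) ∧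
      (∀ i ≤ n, IsNAdic N (a i)) ∧
      (∀ i < n, ∃ q : ℤ, ∀ x ∈ Set.Icc (a i) (a (i + 1)),
        f x = f (a i) + (N : ℝ) ^ q * (x - a i))

open MeasureTheory Metric Filter Set


noncomputable def fA (N : ℕ) (a : ℝ) (x : ℝ) : ℝ :=
  if x ≤ a then x / N else if x ≤ 1 - a / N then x - (a - a / N) else N * x - (N - 1)

lemma sm_glue {g h : ℝ → ℝ} (a : ℝ) (hg : StrictMono g) (hh : StrictMono h)
    (heq : g a = h a) : StrictMono (fun x => if x ≤ a then g x else h x) := by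
  intro u v huv
  by_cases hu : u ≤ a <;> by_cases hv : v ≤ a <;> simp only [hu, hv, if_true, if_false]
  · exact hg huv
  · calc g u ≤ g a := hg.monotone hu
      _ = h a := heq
      _ < h v := hh (lt_of_not_ge hv)
  · exact absurd (huv.trans_le hv) (fun h' => hu h'.le)
  · exact hh huv

lemma hN0' {N : ℕ} (hN : 2 ≤ N) : (0:ℝ) < N := by
  have : (2:ℝ) ≤ N := by exact_mod_cast hN
  linarith

lemma fA_strictMono {N : ℕ} (hN : 2 ≤ N) {a : ℝ} (hab : a ≤ 1 - a / N) :
    StrictMono (fA N a) := by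
  have hN0 : (0:ℝ) < N := hN0' hN
  have h1 : StrictMono (fun x : ℝ => x / (N:ℝ)) := strictMono_id.div_const hN0
  have h2 : StrictMono (fun x : ℝ => x - (a - a / N)) := fun u v huv => by dsimp; linarith
  have h3 : StrictMono (fun x : ℝ => (N:ℝ) * x - ((N:ℝ) - 1)) := fun u v huv => by
    dsimp; nlinarith
  have hinner : StrictMono (fun x : ℝ => if x ≤ 1 - a / N then x - (a - a / N) else (N:ℝ) * x - ((N:ℝ)-1)) := by
    refine sm_glue _ h2 h3 ?_
    field_simp
    ring
  have houter := sm_glue a h1 hinner (by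
    simp only [if_pos hab]
    field_simp
    ring)
  convert houter using 2
  rfl

lemma fA_left' {N : ℕ} {a x : ℝ} (hx : x ≤ a) : fA N a x = x / N := by simp [fA, hx]

lemma fA_mid' {N : ℕ} {a x : ℝ} (ha0 : 0 < a) (hab : a < 1 - a/N)
    (hxa : a ≤ x) (hxb : x ≤ 1 - a/N) : fA N a x = x - (a - a / N) := by
  by_cases hxa' : x ≤ a
  · have : x = a := le_antisymm hxa' hxa
    subst this
    rw [fA_left' le_rfl]
    ring
  · simp [fA, hxa', hxb]

-- preimage: translation piece
lemma fA_preimage_trans {N : ℕ} (hN : 2 ≤ N) {a : ℝ} (ha0 : 0 < a) (hab : a < 1 - a/N)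
    {A : Set ℝ} (hA : A ⊆ Set.Icc (a/N) (1 - a)) :
    fA N a ⁻¹' A = (fun x => x - (a - a/N)) ⁻¹' A := by
  have hN0 : (0:ℝ) < N := hN0' hN
  have fa : fA N a a = a / N := fA_left' le_rfl
  have fb : fA N a (1 - a/N) = 1 - a := by
    rw [fA_mid' ha0 hab hab.le le_rfl]; ring
  have sm := fA_strictMono hN hab.le
  ext x
  simp only [Set.mem_preimage]
  constructor
  · intro hx
    obtain ⟨h1, h2⟩ := hA hx
    have hxa : a ≤ x := by
      rw [← sm.le_iff_le, fa]; exact h1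
    have hxb : x ≤ 1 - a/N := by
      rw [← sm.le_iff_le, fb]; exact h2
    rwa [fA_mid' ha0 hab hxa hxb] at hx
  · intro hx
    obtain ⟨h1, h2⟩ := hA hx
    have hxa : a ≤ x := by
      have h1' : a/N ≤ x - (a - a/N) := h1
      linarith
    have hxb : x ≤ 1 - a/N := by
      have h2' : x - (a - a/N) ≤ 1 - a := h2
      linarith
    rwa [fA_mid' ha0 hab hxa hxb]

-- preimage: dilation piece
lemma fA_preimage_dil {N : ℕ} (hN : 2 ≤ N) {a : ℝ} (ha0 : 0 < a) (hab : a < 1 - a/N)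
    {A : Set ℝ} (hA : A ⊆ Set.Icc 0 (a/N)) :
    fA N a ⁻¹' A = (fun x : ℝ => x / (N:ℝ)) ⁻¹' A := by
  have hN0 : (0:ℝ) < N := hN0' hN
  have f0 : fA N a 0 = 0 := by rw [fA_left' ha0.le]; simp
  have fa : fA N a a = a / N := fA_left' le_rfl
  have sm := fA_strictMono hN hab.le
  ext x
  simp only [Set.mem_preimage]
  constructor
  · intro hx
    obtain ⟨h1, h2⟩ := hA hx
    have hxa : x ≤ a := by rw [← sm.le_iff_le, fa]; exact h2
    rwa [fA_left' hxa] at hx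
  · intro hx
    obtain ⟨h1, h2⟩ := hA hx
    have hxa : x ≤ a := by
      have h2' : x / (N:ℝ) ≤ a / N := h2
      exact (div_le_div_iff_of_pos_right hN0).mp h2'
    rwa [fA_left' hxa]

section
variable {N : ℕ}

lemma hN0 (hN : 2 ≤ N) : (0:ℝ) < N := by
  have : (2:ℝ) ≤ N := by exact_mod_cast hN
  linarith

lemma hN2 (hN : 2 ≤ N) : (2:ℝ) ≤ N := by exact_mod_cast hN

lemma a_le_half (hN : 2 ≤ N) {m : ℕ} (hm : 1 ≤ m) : ((N:ℝ)⁻¹)^m ≤ 1/2 := by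
  have h2 := hN2 hN
  calc ((N:ℝ)⁻¹)^m ≤ ((N:ℝ)⁻¹)^1 :=
        pow_le_pow_of_le_one (by positivity) (by rw [inv_le_one_iff₀]; right; linarith) hm
    _ ≤ 1/2 := by
        rw [pow_one, inv_le_comm₀ (by linarith) (by norm_num)]
        linarith

-- value computations for fA (generic a with the standing bounds)
lemma fA_left {a x : ℝ} (hx : x ≤ a) : fA N a x = x / N := by simp [fA, hx]

lemma fA_mid (hN : 2 ≤ N) {a x : ℝ} (ha0 : 0 < a) (hab : a < 1 - a/N)
    (hxa : a ≤ x) (hxb : x ≤ 1 - a/N) : fA N a x = x - (a - a / N) := by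
  by_cases hxa' : x ≤ a
  · have : x = a := le_antisymm hxa' hxa
    subst this
    rw [fA_left le_rfl]
    ring
  · simp [fA, hxa', hxb]

lemma fA_right (hN : 2 ≤ N) {a x : ℝ} (ha0 : 0 < a) (hab : a < 1 - a/N)
    (hxb : 1 - a/N ≤ x) : fA N a x = N * x - (N - 1) := by
  have h0 := hN0 hN
  by_cases hxb' : x ≤ 1 - a/N
  · have hx : x = 1 - a/N := le_antisymm hxb' hxb
    subst hx
    have h' : ¬ (1 - a/N ≤ a) := by linarith
    have h' : ¬ ((1 - a/N : ℝ) ≤ a) := by linarith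
    have : fA N a (1 - a/N) = (1 - a/N) - (a - a/N) := by simp [fA, h']
    rw [this]
    field_simp
    ring
  · have h' : ¬ (x ≤ a) := by linarith
    simp [fA, h', hxb']

lemma fA_mem (hN : 2 ≤ N) {m : ℕ} (hm : 1 ≤ m) : InFN N (fA N (((N:ℝ)⁻¹)^m)) := by
  have h2 := hN2 hN
  have h0 := hN0 hN
  set a : ℝ := ((N:ℝ)⁻¹)^m with ha_def
  have ha0 : 0 < a := by positivity
  have hah : a ≤ 1/2 := a_le_half hN hm
  have haN : a / N ≤ a / 2 := div_le_div_of_nonneg_left ha0.le (by norm_num) h2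
  have haN0 : 0 < a / N := by positivity
  have hab : a < 1 - a / N := by nlinarith
  have hb1 : 1 - a / N < 1 := by linarith
  have f0 : fA N a 0 = 0 := by rw [fA_left ha0.le]; simp
  have f1 : fA N a 1 = 1 := by rw [fA_right hN ha0 hab hb1.le]; ring
  have fa : fA N a a = a / N := fA_left le_rfl
  have fb : fA N a (1 - a/N) = 1 - a := by
    rw [fA_mid hN ha0 hab hab.le le_rfl]; ring
  refine ⟨f0, f1, 3,
    (fun i => if i = 0 then 0 else if i = 1 then a else if i = 2 then 1 - a/N else 1),
    by norm_num, by norm_num, by norm_num, ?_, ?_, ?_⟩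
  · intro i hi
    interval_cases i <;> norm_num <;> linarith
  · intro i hi
    have hNm : ((N:ℝ))^m ≠ 0 := by positivity
    have hNm1 : ((N:ℝ))^(m+1) ≠ 0 := by positivity
    interval_cases i <;> norm_num
    · exact ⟨0, 0, by norm_num⟩
    · exact ⟨1, m, by rw [ha_def, inv_pow]; norm_num⟩
    · refine ⟨(N:ℤ)^(m+1) - 1, m+1, ?_⟩
      push_cast
      rw [ha_def, inv_pow]
      field_simp
      ring
    · exact ⟨1, 0, by norm_num⟩
  · intro i hi
    interval_cases i
    · refine ⟨-1, fun x hx => ?_⟩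
      norm_num at hx ⊢
      rw [fA_left hx.2, f0]
      field_simp
      ring
    · refine ⟨0, fun x hx => ?_⟩
      norm_num at hx ⊢
      rw [fA_mid hN ha0 hab hx.1 hx.2, fa]
      push_cast
      ring
    · refine ⟨1, fun x hx => ?_⟩
      norm_num at hx ⊢
      rw [fA_right hN ha0 hab (by linarith [hx.1] : 1 - a/N ≤ x), fb]
      push_cast
      ring_nf
      field_simp
      ring

end


lemma ae_translate {φ : ℝ → Prop} (c : ℝ) (hφ : ∀ᵐ y ∂(volume : Measure ℝ), φ y) :
    ∀ᵐ y ∂(volume : Measure ℝ), φ (y + c) := by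
  rw [MeasureTheory.ae_iff] at hφ ⊢
  have h : {y : ℝ | ¬ φ (y + c)} = (fun y => y + c) ⁻¹' {y | ¬ φ y} := rfl
  rw [h, measure_preimage_add_right]
  exact hφ

lemma aux_core (S : Set ℝ) (hSm : MeasurableSet S) (hSsub : S ⊆ Set.Ioo 0 1)
    (u c : ℕ → ℝ) (hc : ∀ m, 0 < c m) (hcu : ∀ m, c m < u m)
    (hu0 : Tendsto u atTop (nhds 0))
    (hrel : ∀ m, ∀ᵐ y ∂(volume : Measure ℝ),
      y ∈ Set.Icc (u m) (1 - u m) → (y ∈ S ↔ y + c m ∈ S))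
    (x z : ℝ) (hx : x ∈ Set.Ioo (0:ℝ) 1) (hz : z ∈ Set.Ioo (0:ℝ) 1) (hxz : x < z)
    (hdx : Tendsto (fun r => volume (S ∩ closedBall x r) / volume (closedBall x r))
      (nhdsWithin 0 (Set.Ioi 0)) (nhds 1))
    (hdz : Tendsto (fun r => volume ((Set.Ioo 0 1 \ S) ∩ closedBall z r) / volume (closedBall z r))
      (nhdsWithin 0 (Set.Ioi 0)) (nhds 1)) :
    False := by
  obtain ⟨hx0, hx1⟩ := hx
  obtain ⟨hz0, hz1⟩ := hz
  set T := Set.Ioo (0:ℝ) 1 \ S with hT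
  set δ : ℝ := min x (1 - z) with hδdef
  have hδ : 0 < δ := lt_min hx0 (by linarith)
  have hδx : δ ≤ x := min_le_left _ _
  have hδz : δ ≤ 1 - z := min_le_right _ _
  have h910 : ENNReal.ofReal (9/10) < 1 := by
    rw [ENNReal.ofReal_lt_one]; norm_num
  have ev1 : ∀ᶠ r in nhdsWithin (0:ℝ) (Set.Ioi 0),
      ENNReal.ofReal (9/10) < volume (S ∩ closedBall x r) / volume (closedBall x r) :=
    hdx.eventually (eventually_gt_nhds h910)
  have ev2 : ∀ᶠ r in nhdsWithin (0:ℝ) (Set.Ioi 0),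
      ENNReal.ofReal (9/10) < volume (T ∩ closedBall z r) / volume (closedBall z r) :=
    hdz.eventually (eventually_gt_nhds h910)
  have ev3 : ∀ᶠ r in nhdsWithin (0:ℝ) (Set.Ioi 0), r < δ/2 :=
    eventually_nhdsWithin_of_eventually_nhds (eventually_lt_nhds (by linarith))
  have ev0 : ∀ᶠ r in nhdsWithin (0:ℝ) (Set.Ioi 0), (0:ℝ) < r :=
    eventually_mem_nhdsWithin
  obtain ⟨r, ⟨⟨h1r, h2r⟩, h3r, h0r⟩⟩ := (((ev1.and ev2).and (ev3.and ev0)).exists)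
  have hminpos : 0 < min (x - r) (min (1 - z - 2*r) (r/10)) :=
    lt_min (by linarith) (lt_min (by linarith) (by linarith))
  obtain ⟨m, hm⟩ := (hu0.eventually (eventually_lt_nhds hminpos)).exists
  have hum1 : u m ≤ x - r := hm.le.trans (min_le_left _ _)
  have hum2 : u m ≤ 1 - z - 2*r := hm.le.trans ((min_le_right _ _).trans (min_le_left _ _))
  have hum3 : u m ≤ r/10 := hm.le.trans ((min_le_right _ _).trans (min_le_right _ _))
  have hcm : 0 < c m := hc m
  have hcr : c m ≤ r/10 := (hcu m).le.trans hum3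
  set j := Nat.ceil ((z - x)/ c m) with hj
  have hzx0 : (0:ℝ) ≤ (z - x)/c m := div_nonneg (by linarith) hcm.le
  have hdivmul : (z - x)/(c m) * c m = z - x := div_mul_cancel₀ _ hcm.ne'
  have hj1 : z - x ≤ (j:ℝ) * c m := by
    rw [← div_le_iff₀ hcm]
    exact Nat.le_ceil _
  have hj2 : (j:ℝ) * c m < (z - x) + c m := by
    have h' : ((j:ℝ)) < (z - x)/(c m) + 1 := by
      have := Nat.ceil_lt_add_one (R := ℝ) (a := (z - x)/c m) hzx0
      exact_mod_cast this
    nlinarith [mul_lt_mul_of_pos_right h' hcm]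
  set τ := (j:ℝ) * c m with hτ
  have chain : ∀ k : ℕ, ∀ᵐ y ∂(volume : Measure ℝ),
      (u m ≤ y ∧ y + (k:ℝ) * c m ≤ 1 - u m) → (y ∈ S ↔ y + (k:ℝ) * c m ∈ S) := by
    intro k
    induction k with
    | zero => filter_upwards with y hy; norm_num
    | succ n ih =>
      have ih' := ae_translate (c m) ih
      filter_upwards [hrel m, ih'] with y h1 h2 hcond
      obtain ⟨hya, hyb⟩ := hcond
      have hn0 : (0:ℝ) ≤ (n:ℝ) := Nat.cast_nonneg n
      have hcast : ((n+1:ℕ):ℝ) = (n:ℝ) + 1 := by push_cast; ring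
      rw [hcast] at hyb
      have hcm' : 0 < c m := hc m
      have hstep : y ∈ S ↔ y + c m ∈ S := h1 ⟨hya, by nlinarith⟩
      have h2' : y + c m ∈ S ↔ y + c m + (n:ℝ) * c m ∈ S :=
        h2 ⟨by linarith, by linarith⟩
      have heq : y + c m + (n:ℝ)*c m = y + ((n:ℝ)+1)*c m := by ring
      rw [hstep, h2', heq, hcast]
  -- a.e. points of S ∩ ball(x,r) are moved into G by +τ
  set G := S ∩ closedBall z (r + c m) with hG
  have hsub2 : ∀ᵐ y ∂(volume : Measure ℝ),
      y ∈ S ∩ closedBall x r → y ∈ (fun y => y + τ) ⁻¹' G := by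
    filter_upwards [chain j] with y hy hyE
    obtain ⟨hyS, hyB⟩ := hyE
    rw [Real.closedBall_eq_Icc] at hyB
    obtain ⟨hy1, hy2⟩ := hyB
    have hyS' : y + τ ∈ S := (hy ⟨by linarith, by linarith⟩).mp hyS
    refine ⟨hyS', ?_⟩
    rw [Real.closedBall_eq_Icc]
    constructor <;> simp only [hτ] <;> linarith
  have hle1 : volume (S ∩ closedBall x r) ≤ volume G := by
    calc volume (S ∩ closedBall x r) ≤ volume ((fun y => y + τ) ⁻¹' G) :=
          measure_mono_ae hsub2
      _ = volume G := measure_preimage_add_right volume τ G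
  -- upper bound for G
  have hGsub : G ⊆ (S ∩ closedBall z r) ∪
      (Set.Icc (z - r - c m) (z - r) ∪ Set.Icc (z + r) (z + r + c m)) := by
    rintro y ⟨hyS, hyB⟩
    rw [Real.closedBall_eq_Icc] at hyB
    by_cases h' : y ∈ closedBall z r
    · exact Or.inl ⟨hyS, h'⟩
    · rw [Real.closedBall_eq_Icc] at h'
      simp only [Set.mem_Icc, not_and_or, not_le] at h'
      right
      rcases h' with h'|h'
      · exact Or.inl ⟨by linarith [hyB.1], by linarith⟩
      · exact Or.inr ⟨by linarith, by linarith [hyB.2]⟩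
  have hub : volume G ≤ volume (S ∩ closedBall z r) + ENNReal.ofReal (2 * c m) := by
    refine le_trans (measure_mono hGsub) ?_
    refine le_trans (measure_union_le _ _) ?_
    refine add_le_add_right (le_trans (measure_union_le _ _) ?_) _
    rw [Real.volume_Icc, Real.volume_Icc]
    rw [show z - r - (z - r - c m) = c m by ring, show z + r + c m - (z + r) = c m by ring]
    rw [← ENNReal.ofReal_add hcm.le hcm.le]
    exact le_of_eq (by rw [two_mul])
  -- S and T inside ball(z,r)
  have hTm : MeasurableSet T := measurableSet_Ioo.diff hSm
  have hdisj : Disjoint (S ∩ closedBall z r) (T ∩ closedBall z r) := by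
    have : Disjoint S T := Set.disjoint_sdiff_right
    exact this.mono Set.inter_subset_left Set.inter_subset_left
  have hsum : volume (S ∩ closedBall z r) + volume (T ∩ closedBall z r)
      ≤ ENNReal.ofReal (2*r) := by
    rw [← measure_union hdisj (hTm.inter measurableSet_closedBall)]
    refine le_trans (measure_mono ?_) (le_of_eq (Real.volume_closedBall z r))
    rintro y (⟨_, hy⟩|⟨_, hy⟩) <;> exact hy
  -- lower bounds
  have hbne0 : volume (closedBall x r) ≠ 0 := by
    rw [Real.volume_closedBall]
    simp only [ne_eq, ENNReal.ofReal_eq_zero, not_le]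
    linarith
  have hbnetop : volume (closedBall x r) ≠ ⊤ := by
    rw [Real.volume_closedBall]; exact ENNReal.ofReal_ne_top
  have hl1 : ENNReal.ofReal (9/10) * ENNReal.ofReal (2*r) < volume (S ∩ closedBall x r) := by
    have h' := (ENNReal.lt_div_iff_mul_lt (Or.inl hbne0) (Or.inl hbnetop)).mp h1r
    rwa [Real.volume_closedBall] at h'
  have hbne0' : volume (closedBall z r) ≠ 0 := by
    rw [Real.volume_closedBall]
    simp only [ne_eq, ENNReal.ofReal_eq_zero, not_le]
    linarith
  have hbnetop' : volume (closedBall z r) ≠ ⊤ := by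
    rw [Real.volume_closedBall]; exact ENNReal.ofReal_ne_top
  have hl3 : ENNReal.ofReal (9/10) * ENNReal.ofReal (2*r) < volume (T ∩ closedBall z r) := by
    have h' := (ENNReal.lt_div_iff_mul_lt (Or.inl hbne0') (Or.inl hbnetop')).mp h2r
    rwa [Real.volume_closedBall] at h'
  have hfin := ENNReal.add_lt_add hl1 hl3
  have hchain2 : volume (S ∩ closedBall x r) + volume (T ∩ closedBall z r)
      ≤ ENNReal.ofReal (2*r) + ENNReal.ofReal (2*c m) := by
    calc volume (S ∩ closedBall x r) + volume (T ∩ closedBall z r)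
        ≤ volume G + volume (T ∩ closedBall z r) := add_le_add_left hle1 _
      _ ≤ (volume (S ∩ closedBall z r) + ENNReal.ofReal (2*c m)) + volume (T ∩ closedBall z r) :=
          add_le_add_left hub _
      _ = (volume (S ∩ closedBall z r) + volume (T ∩ closedBall z r)) + ENNReal.ofReal (2*c m) := by
          ring
      _ ≤ ENNReal.ofReal (2*r) + ENNReal.ofReal (2*c m) := add_le_add_left hsum _
  have hfinal : ENNReal.ofReal (9/10) * ENNReal.ofReal (2*r) + ENNReal.ofReal (9/10) * ENNReal.ofReal (2*r)
      < ENNReal.ofReal (2*r) + ENNReal.ofReal (2*c m) := lt_of_lt_of_le hfin hchain2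
  rw [← ENNReal.ofReal_mul (by norm_num : (0:ℝ) ≤ 9/10)] at hfinal
  rw [← ENNReal.ofReal_add (by linarith) (by linarith), ← ENNReal.ofReal_add (by linarith) (by linarith)] at hfinal
  rw [ENNReal.ofReal_lt_ofReal_iff (by linarith)] at hfinal
  linarith

lemma aux_null_or_conull (S : Set ℝ) (hSm : MeasurableSet S) (hSsub : S ⊆ Set.Ioo 0 1)
    (u c : ℕ → ℝ) (hc : ∀ m, 0 < c m) (hcu : ∀ m, c m < u m)
    (hu0 : Tendsto u atTop (nhds 0))
    (hrel : ∀ m, ∀ᵐ y ∂(volume : Measure ℝ),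
      y ∈ Set.Icc (u m) (1 - u m) → (y ∈ S ↔ y + c m ∈ S)) :
    volume S = 0 ∨ volume (Set.Ioo 0 1 \ S) = 0 := by
  by_contra hcon
  push_neg at hcon
  obtain ⟨hS0, hT0⟩ := hcon
  set T := Set.Ioo (0:ℝ) 1 \ S with hT
  have hTm : MeasurableSet T := measurableSet_Ioo.diff hSm
  have hTsub : T ⊆ Set.Ioo 0 1 := Set.diff_subset
  have hST : Set.Ioo (0:ℝ) 1 \ T = S := Set.diff_diff_cancel_left hSsub
  -- density point of S
  have hxae := Besicovitch.ae_tendsto_measure_inter_div (volume : Measure ℝ) S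
  have hrestr : (volume.restrict S) ≠ 0 := by
    intro h0
    apply hS0
    have := congrArg (fun μ : Measure ℝ => μ Set.univ) h0
    simpa [Measure.restrict_apply_univ] using this
  haveI : (ae (volume.restrict S)).NeBot := ae_neBot.mpr hrestr
  obtain ⟨x, hxd, hxS⟩ := (hxae.and (ae_restrict_mem hSm)).exists
  -- density point of T
  have hzae := Besicovitch.ae_tendsto_measure_inter_div (volume : Measure ℝ) T
  have hrestrT : (volume.restrict T) ≠ 0 := by
    intro h0
    apply hT0
    have := congrArg (fun μ : Measure ℝ => μ Set.univ) h0
    simpa [Measure.restrict_apply_univ] using this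
  haveI : (ae (volume.restrict T)).NeBot := ae_neBot.mpr hrestrT
  obtain ⟨z, hzd, hzT⟩ := (hzae.and (ae_restrict_mem hTm)).exists
  have hxI : x ∈ Set.Ioo (0:ℝ) 1 := hSsub hxS
  have hzI : z ∈ Set.Ioo (0:ℝ) 1 := hTsub hzT
  -- relation for T
  have hrelT : ∀ m, ∀ᵐ y ∂(volume : Measure ℝ),
      y ∈ Set.Icc (u m) (1 - u m) → (y ∈ T ↔ y + c m ∈ T) := by
    intro m
    filter_upwards [hrel m] with y hy hyW
    have h1 := hy hyW
    obtain ⟨hw1, hw2⟩ := hyW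
    have hcm := hc m
    have hcum := hcu m
    have hum : 0 < u m := hcm.trans hcum
    have hyI : y ∈ Set.Ioo (0:ℝ) 1 := ⟨by linarith, by linarith⟩
    have hycI : y + c m ∈ Set.Ioo (0:ℝ) 1 := ⟨by linarith, by linarith⟩
    constructor
    · rintro ⟨_, hyS⟩
      exact ⟨hycI, fun hS' => hyS (h1.mpr hS')⟩
    · rintro ⟨_, hyS⟩
      exact ⟨hyI, fun hS' => hyS (h1.mp hS')⟩
  rcases lt_trichotomy x z with h|h|h
  · exact aux_core S hSm hSsub u c hc hcu hu0 hrel x z hxI hzI h hxd hzd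
  · subst h
    exact hzT.2 hxS
  · refine aux_core T hTm hTsub u c hc hcu hu0 hrelT z x hzI hxI h hzd ?_
    rw [hST]
    exact hxd

lemma key_rel {N : ℕ} (hN : 2 ≤ N) (μ : Measure ℝ) [SigmaFinite μ]
    (hac : μ ≪ volume.restrict (Set.Icc (0 : ℝ) 1))
    (hinv : ∀ f : ℝ → ℝ, InFN N f → ∀ A : Set ℝ, MeasurableSet A →
      μ (f ⁻¹' A) = μ A)
    {m : ℕ} (hm : 1 ≤ m) :
    ∀ᵐ y ∂(volume : Measure ℝ),
      y ∈ Set.Icc (((N:ℝ)⁻¹)^m / N) (1 - ((N:ℝ)⁻¹)^m) →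
        μ.rnDeriv (volume.restrict (Set.Icc (0:ℝ) 1)) (y + (((N:ℝ)⁻¹)^m - ((N:ℝ)⁻¹)^m / N))
          = μ.rnDeriv (volume.restrict (Set.Icc (0:ℝ) 1)) y := by
  have h2 := hN2 hN
  have h0 := hN0' hN
  set ν : Measure ℝ := volume.restrict (Set.Icc (0:ℝ) 1) with hν
  set h : ℝ → ENNReal := μ.rnDeriv ν with hh
  have hmeas : Measurable h := Measure.measurable_rnDeriv μ ν
  have hdens : ν.withDensity h = μ := Measure.withDensity_rnDeriv_eq μ ν hac
  set a : ℝ := ((N:ℝ)⁻¹)^m with ha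
  have ha0 : 0 < a := by positivity
  have hah : a ≤ 1/2 := a_le_half hN hm
  have haN : a / N ≤ a / 2 := div_le_div_of_nonneg_left ha0.le (by norm_num) h2
  have haN0 : 0 < a / N := by positivity
  have hab : a < 1 - a / N := by nlinarith
  set c : ℝ := a - a / N with hcdef
  have hc0 : 0 < c := by simp only [hcdef]; linarith
  set W : Set ℝ := Set.Icc (a/N) (1 - a) with hW
  have hWm : MeasurableSet W := measurableSet_Icc
  have hWsub : W ⊆ Set.Icc (0:ℝ) 1 := fun x hx => ⟨le_trans haN0.le hx.1, by
    have : x ≤ 1 - a := hx.2; linarith⟩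
  -- Step A : measure identity
  have stepA : ∀ B : Set ℝ, MeasurableSet B → B ⊆ W →
      μ ((fun x => x - c) ⁻¹' B) = μ B := by
    intro B hBm hBW
    rw [← fA_preimage_trans hN ha0 hab hBW]
    exact hinv _ (fA_mem hN hm) B hBm
  -- Step B : μ as an integral of h w.r.t. volume
  have stepB : ∀ B : Set ℝ, MeasurableSet B → B ⊆ Set.Icc (0:ℝ) 1 →
      μ B = ∫⁻ x in B, h x ∂(volume : Measure ℝ) := by
    intro B hBm hBsub
    rw [← hdens, withDensity_apply _ hBm, hν, Measure.restrict_restrict hBm,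
      Set.inter_eq_self_of_subset_left hBsub]
  -- Step C : change of variables
  have stepC : ∀ B : Set ℝ, MeasurableSet B → B ⊆ W →
      ∫⁻ y in B, h (y + c) ∂(volume : Measure ℝ) = ∫⁻ y in B, h y ∂(volume : Measure ℝ) := by
    intro B hBm hBW
    have hpre_meas : MeasurableSet ((fun x => x - c) ⁻¹' B) :=
      hBm.preimage (measurable_id.sub measurable_const)
    have himg : (fun y => y + c) '' B = (fun x => x - c) ⁻¹' B := by
      ext x
      simp only [Set.mem_image, Set.mem_preimage]
      constructor
      · rintro ⟨y, hy, rfl⟩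
        simpa using hy
      · intro hx
        exact ⟨x - c, hx, by ring⟩
    have hpre_sub : ((fun x => x - c) ⁻¹' B) ⊆ Set.Icc (0:ℝ) 1 := by
      intro x hx
      have hx' := hBW hx
      obtain ⟨hx1, hx2⟩ := hx'
      simp only [hW] at hx1 hx2
      constructor
      · simp only [hcdef] at hx1 ⊢; linarith
      · simp only [hcdef] at hx2 ⊢; linarith
    calc ∫⁻ y in B, h (y + c) ∂(volume : Measure ℝ)
        = ∫⁻ x in (fun y => y + c) '' B, h x ∂(volume : Measure ℝ) :=
          (measurePreserving_add_right volume c).setLIntegral_comp_emb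
            (MeasurableEquiv.addRight c).measurableEmbedding h B
      _ = ∫⁻ x in (fun x => x - c) ⁻¹' B, h x ∂(volume : Measure ℝ) := by rw [himg]
      _ = μ ((fun x => x - c) ⁻¹' B) := (stepB _ hpre_meas hpre_sub).symm
      _ = μ B := stepA B hBm hBW
      _ = ∫⁻ y in B, h y ∂(volume : Measure ℝ) := stepB B hBm (hBW.trans hWsub)
  -- Step D : conclude a.e. equality on W
  have stepD : (fun y => h (y + c)) =ᶠ[ae ((volume : Measure ℝ).restrict W)] h := by
    apply ae_eq_of_forall_setLIntegral_eq_of_sigmaFinite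
      (hmeas.comp (measurable_add_const c)) hmeas
    intro s hs _
    rw [Measure.restrict_restrict hs]
    exact stepC (s ∩ W) (hs.inter hWm) Set.inter_subset_right
  exact (ae_restrict_iff' hWm).mp stepD


set_option maxHeartbeats 1000000 in
/-- There is no nonzero σ-finite Borel measure on `[0,1]` that is
absolutely continuous with respect to Lebesgue measure and invariant under `F(N)`:
any σ-finite measure `μ` with `μ ≪ λ|_{[0,1]}` satisfying `μ(f⁻¹(A)) = μ(A)` for every
`f ∈ F(N)` and every Borel set `A` is the zero measure. -/
theorem statement14 (N : ℕ) (hN : 2 ≤ N) (μ : Measure ℝ) [SigmaFinite μ]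
    (hac : μ ≪ volume.restrict (Set.Icc (0 : ℝ) 1))
    (hinv : ∀ f : ℝ → ℝ, InFN N f → ∀ A : Set ℝ, MeasurableSet A →
      μ (f ⁻¹' A) = μ A) :
    μ = 0 := by
  classical
  have h2 := hN2 hN
  have h0 := hN0' hN
  set ν : Measure ℝ := volume.restrict (Set.Icc (0:ℝ) 1) with hν
  set h : ℝ → ENNReal := μ.rnDeriv ν with hh
  have hmeas : Measurable h := Measure.measurable_rnDeriv μ ν
  have hdens : ν.withDensity h = μ := Measure.withDensity_rnDeriv_eq μ ν hac
  -- parameters for the translation relations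
  set u : ℕ → ℝ := fun k => ((N:ℝ)⁻¹)^(k+1) with hu
  set c : ℕ → ℝ := fun k => ((N:ℝ)⁻¹)^(k+1) - ((N:ℝ)⁻¹)^(k+2) with hc
  have hNinv0 : 0 < (N:ℝ)⁻¹ := by positivity
  have hNinv1 : (N:ℝ)⁻¹ < 1 := by
    rw [inv_lt_one_iff₀]; right; linarith
  have hpow_lt : ∀ k : ℕ, ((N:ℝ)⁻¹)^(k+2) < ((N:ℝ)⁻¹)^(k+1) := by
    intro k
    apply pow_lt_pow_right_of_lt_one₀ hNinv0 hNinv1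
    omega
  have hcpos : ∀ k, 0 < c k := fun k => by
    simp only [hc]; linarith [hpow_lt k]
  have hcu : ∀ k, c k < u k := fun k => by
    simp only [hc, hu]
    have : (0:ℝ) < ((N:ℝ)⁻¹)^(k+2) := by positivity
    linarith
  have hu0 : Tendsto u atTop (nhds 0) := by
    have hgeo := tendsto_pow_atTop_nhds_zero_of_lt_one hNinv0.le hNinv1
    exact hgeo.comp (tendsto_add_atTop_nat 1)
  -- key translation relation for h
  have key : ∀ k : ℕ, ∀ᵐ y ∂(volume : Measure ℝ),
      y ∈ Set.Icc (u k) (1 - u k) → h (y + c k) = h y := by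
    intro k
    have hk := key_rel hN μ hac hinv (m := k+1) (Nat.le_add_left 1 k)
    have haN : ((N:ℝ)⁻¹)^(k+1) / N = ((N:ℝ)⁻¹)^(k+2) := by
      rw [pow_succ _ (k+1), div_eq_mul_inv]
    filter_upwards [hk] with y hy hyW
    obtain ⟨hw1, hw2⟩ := hyW
    have hck := hcpos k
    have h' : h (y + (((N:ℝ)⁻¹)^(k+1) - ((N:ℝ)⁻¹)^(k+1) / N)) = h y := by
      apply hy
      constructor
      · rw [haN]
        calc ((N:ℝ)⁻¹)^(k+2) ≤ ((N:ℝ)⁻¹)^(k+1) := (hpow_lt k).le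
          _ ≤ y := hw1
      · exact hw2
    have hceq : ((N:ℝ)⁻¹)^(k+1) - ((N:ℝ)⁻¹)^(k+1) / N = c k := by
      rw [haN, hc]
    rwa [hceq] at h'
  -- null-or-conull property for super-level sets of h
  have noc : ∀ t : ENNReal,
      volume (Set.Ioo (0:ℝ) 1 ∩ {x | t < h x}) = 0 ∨
      volume (Set.Ioo (0:ℝ) 1 \ (Set.Ioo (0:ℝ) 1 ∩ {x | t < h x})) = 0 := by
    intro t
    apply aux_null_or_conull _ (measurableSet_Ioo.inter (hmeas measurableSet_Ioi))
      Set.inter_subset_left u c hcpos hcu hu0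
    intro k
    filter_upwards [key k] with y hy hyW
    have heq := hy hyW
    obtain ⟨hw1, hw2⟩ := hyW
    have huk : 0 < u k := by simp only [hu]; positivity
    have hck := hcpos k
    have hcuk := hcu k
    have hyI : y ∈ Set.Ioo (0:ℝ) 1 := ⟨by linarith, by linarith⟩
    have hycI : y + c k ∈ Set.Ioo (0:ℝ) 1 := ⟨by linarith, by linarith⟩
    constructor
    · rintro ⟨_, hlt⟩
      refine ⟨hycI, ?_⟩
      show t < h (y + c k)
      rw [heq]
      exact hlt
    · rintro ⟨_, hlt⟩
      have hlt' : t < h (y + c k) := hlt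
      rw [heq] at hlt'
      exact ⟨hyI, hlt'⟩
  -- the restricted reference measure on (0,1)
  set ρ : Measure ℝ := volume.restrict (Set.Ioo (0:ℝ) 1) with hρ
  have hρ_apply : ∀ A : Set ℝ, MeasurableSet A → ρ A = volume (Set.Ioo (0:ℝ) 1 ∩ A) := by
    intro A hA
    rw [hρ, Measure.restrict_apply hA, Set.inter_comm]
  set C : ENNReal := essSup h ρ with hC
  have hCle : ∀ᵐ x ∂ρ, h x ≤ C := ae_le_essSup
  -- C is not ⊤
  have hCtop : C ≠ ⊤ := by
    intro htop
    have hSn : ∀ n : ℕ, volume (Set.Ioo (0:ℝ) 1 \ (Set.Ioo (0:ℝ) 1 ∩ {x | (n:ENNReal) < h x})) = 0 := by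
      intro n
      rcases noc (n:ENNReal) with hl | hr
      · exfalso
        have hae : ∀ᵐ x ∂ρ, h x ≤ (n:ENNReal) := by
          rw [ae_iff]
          have : {x | ¬ h x ≤ (n:ENNReal)} = {x | (n:ENNReal) < h x} := by
            ext x; simp [not_le]
          rw [this, hρ_apply {x | (n:ENNReal) < h x} (measurableSet_lt measurable_const hmeas)]
          exact hl
        have hle' := essSup_le_of_ae_le (μ := ρ) (n:ENNReal) hae
        rw [← hC, htop, top_le_iff] at hle'
        exact ENNReal.natCast_ne_top n hle'
      · exact hr
    -- a.e. point of (0,1) has h = ⊤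
    have hcover : Set.Ioo (0:ℝ) 1 ⊆ (Set.Ioo (0:ℝ) 1 ∩ {x | h x = ⊤}) ∪
        ⋃ n : ℕ, (Set.Ioo (0:ℝ) 1 \ (Set.Ioo (0:ℝ) 1 ∩ {x | (n:ENNReal) < h x})) := by
      intro x hx
      by_cases hx' : h x = ⊤
      · exact Or.inl ⟨hx, hx'⟩
      · obtain ⟨n, hn⟩ := ENNReal.exists_nat_gt hx'
        refine Or.inr (Set.mem_iUnion.mpr ⟨n, hx, ?_⟩)
        rintro ⟨_, hmem⟩
        exact lt_asymm hn hmem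
    have hle : volume (Set.Ioo (0:ℝ) 1) ≤
        volume (Set.Ioo (0:ℝ) 1 ∩ {x | h x = ⊤}) +
        volume (⋃ n : ℕ, (Set.Ioo (0:ℝ) 1 \ (Set.Ioo (0:ℝ) 1 ∩ {x | (n:ENNReal) < h x}))) :=
      le_trans (measure_mono hcover) (measure_union_le _ _)
    rw [measure_iUnion_null hSn, add_zero] at hle
    have hIoo1 : volume (Set.Ioo (0:ℝ) 1) = 1 := by
      rw [Real.volume_Ioo]; norm_num
    have hpos : volume (Set.Ioo (0:ℝ) 1 ∩ {x | h x = ⊤}) ≠ 0 := by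
      intro h0
      rw [hIoo1, h0] at hle
      exact (by norm_num : ¬ ((1:ENNReal) ≤ 0)) hle
    -- contradiction with a.e. finiteness of rnDeriv
    have hfin := Measure.rnDeriv_lt_top μ ν
    rw [ae_iff] at hfin
    have htopset : {x | ¬ μ.rnDeriv ν x < ⊤} = {x | h x = ⊤} := by
      ext x
      simp [hh, lt_top_iff_ne_top]
    rw [htopset, hν, Measure.restrict_apply
      (show MeasurableSet {x : ℝ | h x = ⊤} from hmeas (measurableSet_singleton ⊤))] at hfin
    apply hpos
    apply measure_mono_null _ hfin
    intro x hx
    exact ⟨hx.2, Set.Ioo_subset_Icc_self hx.1⟩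
  -- C = 0
  have hC0 : C = 0 := by
    by_contra hCne
    -- h ≥ C a.e.
    have hge : ∀ᵐ x ∂ρ, C ≤ h x := by
      by_contra hnot
      rw [ae_iff] at hnot
      have hset : {x | ¬ C ≤ h x} = {x | h x < C} := by ext x; simp [not_le]
      rw [hset] at hnot
      have hLsub : {x | h x < C} ⊆ ⋃ q : ℚ,
          {x | h x ≤ (((q:ℝ).toNNReal : ENNReal)) ∧ (((q:ℝ).toNNReal : ENNReal)) < C} := by
        intro x hx
        obtain ⟨q, _, hq1, hq2⟩ := ENNReal.lt_iff_exists_rat_btwn.mp hx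
        exact Set.mem_iUnion.mpr ⟨q, hq1.le, hq2⟩
      have hex : ∃ q : ℚ, ρ {x | h x ≤ (((q:ℝ).toNNReal : ENNReal)) ∧ (((q:ℝ).toNNReal : ENNReal)) < C} ≠ 0 := by
        by_contra hall
        push_neg at hall
        exact hnot (measure_mono_null hLsub (measure_iUnion_null hall))
      obtain ⟨q, hq⟩ := hex
      set t : ENNReal := ((q:ℝ).toNNReal : ENNReal) with ht
      have htC : t < C := by
        by_contra h'
        apply hq
        have : {x | h x ≤ t ∧ t < C} = ∅ := by
          ext x; simp only [Set.mem_setOf_eq, Set.mem_empty_iff_false, iff_false]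
          rintro ⟨_, h''⟩
          exact h' h''
        rw [this]
        exact measure_empty
      have h1 : ρ {x | h x ≤ t} ≠ 0 := by
        intro h'
        exact hq (measure_mono_null (fun x hx => hx.1) h')
      have h2 : volume (Set.Ioo (0:ℝ) 1 ∩ {x | t < h x}) ≠ 0 := by
        intro h'
        have hae : ∀ᵐ x ∂ρ, h x ≤ t := by
          rw [ae_iff]
          have : {x | ¬ h x ≤ t} = {x | t < h x} := by ext x; simp [not_le]
          rw [this, hρ_apply {x | t < h x} (measurableSet_lt measurable_const hmeas)]
          exact h'
        have := essSup_le_of_ae_le (μ := ρ) t hae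
        rw [← hC] at this
        exact absurd (lt_of_le_of_lt this htC) (lt_irrefl _)
      rcases noc t with hl | hr
      · exact h2 hl
      · apply h1
        have hsub : Set.Ioo (0:ℝ) 1 ∩ {x | h x ≤ t} ⊆
            Set.Ioo (0:ℝ) 1 \ (Set.Ioo (0:ℝ) 1 ∩ {x | t < h x}) := by
          rintro x ⟨hxI, hxle⟩
          refine ⟨hxI, fun hmem => ?_⟩
          have hlt : t < h x := hmem.2
          exact (not_lt.mpr hxle) hlt
        rw [hρ_apply {x | h x ≤ t} (measurableSet_le hmeas measurable_const)]
        exact measure_mono_null hsub hr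
    -- so h = C a.e. on (0,1)
    have haeC : ∀ᵐ x ∂(volume : Measure ℝ), x ∈ Set.Ioo (0:ℝ) 1 → h x = C := by
      rw [← ae_restrict_iff' measurableSet_Ioo]
      filter_upwards [hCle, hge] with x h1 h2
      exact le_antisymm h1 h2
    -- dilation identity
    have ha0 : (0:ℝ) < ((N:ℝ)⁻¹)^1 := by positivity
    have hah : ((N:ℝ)⁻¹)^1 ≤ 1/2 := a_le_half hN le_rfl
    have haN : ((N:ℝ)⁻¹)^1 / N ≤ ((N:ℝ)⁻¹)^1 / 2 :=
      div_le_div_of_nonneg_left ha0.le (by norm_num) h2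
    have hab : ((N:ℝ)⁻¹)^1 < 1 - ((N:ℝ)⁻¹)^1 / N := by nlinarith
    have hsq : ((N:ℝ)⁻¹)^1 / N = ((N:ℝ)⁻¹)^2 := by
      rw [pow_succ _ 1, div_eq_mul_inv]
    have hApre : fA N (((N:ℝ)⁻¹)^1) ⁻¹' (Set.Icc 0 (((N:ℝ)⁻¹)^2)) = Set.Icc 0 ((N:ℝ)⁻¹) := by
      rw [fA_preimage_dil hN ha0 hab
        (by rw [hsq] : Set.Icc (0:ℝ) (((N:ℝ)⁻¹)^2) ⊆ Set.Icc 0 (((N:ℝ)⁻¹)^1 / N))]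
      have hxN : ∀ x : ℝ, x / N * N = x := fun x => div_mul_cancel₀ x h0.ne'
      have hsqN : ((N:ℝ)⁻¹)^2 * N = (N:ℝ)⁻¹ := by
        rw [sq]
        field_simp
      ext x
      simp only [Set.mem_preimage, Set.mem_Icc]
      constructor
      · rintro ⟨hx1, hx2⟩
        constructor
        · nlinarith [mul_nonneg hx1 h0.le, hxN x]
        · nlinarith [mul_le_mul_of_nonneg_right hx2 h0.le, hxN x, hsqN]
      · rintro ⟨hx1, hx2⟩
        refine ⟨div_nonneg hx1 h0.le, ?_⟩
        have := (div_le_div_iff_of_pos_right h0).mpr hx2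
        calc x / (N:ℝ) ≤ (N:ℝ)⁻¹ / N := this
          _ = ((N:ℝ)⁻¹)^1 / N := by rw [pow_one]
          _ = ((N:ℝ)⁻¹)^2 := hsq
    have hfA := hinv _ (fA_mem hN (le_refl 1)) (Set.Icc 0 (((N:ℝ)⁻¹)^2)) measurableSet_Icc
    rw [hApre] at hfA
    have hval : ∀ t : ℝ, 0 < t → t < 1 → μ (Set.Icc 0 t) = C * ENNReal.ofReal t := by
      intro t ht0 ht1
      have hsub : Set.Icc (0:ℝ) t ⊆ Set.Icc (0:ℝ) 1 := Set.Icc_subset_Icc le_rfl ht1.le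
      have hcongr : ∫⁻ x in Set.Ioo (0:ℝ) t, h x ∂(volume : Measure ℝ)
          = ∫⁻ _x in Set.Ioo (0:ℝ) t, C ∂(volume : Measure ℝ) := by
        apply setLIntegral_congr_fun_ae measurableSet_Ioo
        filter_upwards [haeC] with x hx hxI
        exact hx ⟨hxI.1, hxI.2.trans ht1⟩
      rw [← hdens, withDensity_apply _ measurableSet_Icc, hν,
        Measure.restrict_restrict measurableSet_Icc,
        Set.inter_eq_self_of_subset_left hsub,
        ← Measure.restrict_congr_set
          (Ioo_ae_eq_Icc (μ := (volume : Measure ℝ)) (a := (0:ℝ)) (b := t)),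
        hcongr, setLIntegral_const, Real.volume_Ioo, sub_zero]
    have hv1 : μ (Set.Icc 0 ((N:ℝ)⁻¹)) = C * ENNReal.ofReal ((N:ℝ)⁻¹) :=
      hval _ hNinv0 hNinv1
    have hv2 : μ (Set.Icc 0 (((N:ℝ)⁻¹)^2)) = C * ENNReal.ofReal (((N:ℝ)⁻¹)^2) :=
      hval _ (by positivity) (by nlinarith)
    rw [hv1, hv2] at hfA
    have hcancel := (ENNReal.mul_right_strictMono hCne hCtop).injective hfA
    rw [ENNReal.ofReal_eq_ofReal_iff (by positivity) (by positivity)] at hcancel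
    nlinarith [hNinv0, hNinv1, hcancel]
  -- conclude μ = 0
  have hae0 : ∀ᵐ x ∂ρ, h x = 0 := by
    filter_upwards [hCle] with x hx
    rw [hC0] at hx
    exact le_antisymm hx zero_le
  have hIoo0 : ∀ᵐ x ∂(volume : Measure ℝ), x ∈ Set.Ioo (0:ℝ) 1 → h x = 0 :=
    (ae_restrict_iff' measurableSet_Ioo).mp hae0
  have hbdry : volume ({0, 1} : Set ℝ) = 0 := by
    rw [Set.insert_eq]
    exact measure_union_null Real.volume_singleton Real.volume_singleton
  have hb : ∀ᵐ x ∂(volume : Measure ℝ), x ∉ ({0, 1} : Set ℝ) := by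
    rw [ae_iff]
    have hset : {x : ℝ | ¬ x ∉ ({0, 1} : Set ℝ)} = ({0, 1} : Set ℝ) := by
      ext x; simp [not_not]; tauto
    rw [hset]
    exact hbdry
  have hν0 : h =ᶠ[ae ν] 0 := by
    rw [hν, EventuallyEq, ae_restrict_iff' measurableSet_Icc]
    filter_upwards [hIoo0, hb] with x hx hxb hxI
    have hx0 : x ≠ 0 := fun h' => hxb (by simp [h'])
    have hx1 : x ≠ 1 := fun h' => hxb (by simp [h'])
    have : x ∈ Set.Ioo (0:ℝ) 1 :=
      ⟨lt_of_le_of_ne hxI.1 (Ne.symm hx0), lt_of_le_of_ne hxI.2 hx1⟩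
    simpa using hx this
  calc μ = ν.withDensity h := hdens.symm
    _ = ν.withDensity 0 := withDensity_congr_ae hν0
    _ = 0 := withDensity_zero
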